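/- arXiv:2111.01290 — 9 statements merged into one kernel-verified Lean document; each statement's English description precedes it below -/
import Mathlib

section
/- Let g, h : ℝⁿ → ℝ be strongly convex with modulus σ > 0, let x ∈ ℝⁿ, w ∈ ∂h(x), and let y ∈ ℝⁿ satisfy w ∈ ∂g(y) (equivalently, y is the unique minimizer of z ↦ g(z) − ⟨w, z − x⟩). Then φ(y) ≤ φ(x) − σ ‖y − x‖², where φ = g − h. -/
open Set Filter Topology

noncomputable section

/-- The (convex-analysis) subdifferential of `f` at `x`:
the set of `w` with `f z ≥ f x + ⟨w, z - x⟩` for all `z`. -/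
def subdiff {n : ℕ} (f : EuclideanSpace ℝ (Fin n) → ℝ) (x : EuclideanSpace ℝ (Fin n)) :
    Set (EuclideanSpace ℝ (Fin n)) :=
  {w | ∀ z, f x + (inner ℝ w (z - x) : ℝ) ≤ f z}

/-- `f` is strongly convex with modulus `σ`. -/
def StrongConvexWith {n : ℕ} (σ : ℝ) (f : EuclideanSpace ℝ (Fin n) → ℝ) : Prop :=
  ∀ x y : EuclideanSpace ℝ (Fin n), ∀ t : ℝ, 0 < t → t < 1 →
    f (t • x + (1 - t) • y) ≤ t * f x + (1 - t) * f y - σ / 2 * (t * (1 - t) * ‖x - y‖ ^ 2)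

lemma strong_subdiff {n : ℕ} (f : EuclideanSpace ℝ (Fin n) → ℝ) (σ : ℝ) (hσ : 0 < σ)
    (hfs : StrongConvexWith σ f) (y w : EuclideanSpace ℝ (Fin n)) (hw : w ∈ subdiff f y)
    (z : EuclideanSpace ℝ (Fin n)) :
    f y + (inner ℝ w (z - y) : ℝ) + σ / 2 * ‖z - y‖ ^ 2 ≤ f z := by
  by_cases hz : z = y
  · subst hz; simp
  · set c : ℝ := σ / 2 * ‖z - y‖ ^ 2 with hc
    have hnz : (0:ℝ) < ‖z - y‖ := by
      simpa using norm_pos_iff.2 (sub_ne_zero.2 hz)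
    have hcpos : 0 < c := by positivity
    have key : ∀ t : ℝ, 0 < t → t < 1 →
        (inner ℝ w (z - y) : ℝ) ≤ f z - f y - c + c * t := by
      intro t ht0 ht1
      have h1 := hw (t • z + (1 - t) • y)
      have h2 := hfs z y t ht0 ht1
      have h3 : (t • z + (1 - t) • y) - y = t • (z - y) := by
        rw [sub_smul, one_smul, smul_sub]; abel
      rw [h3, inner_smul_right] at h1
      have : f y + t * (inner ℝ w (z - y) : ℝ) ≤
          t * f z + (1 - t) * f y - σ / 2 * (t * (1 - t) * ‖z - y‖ ^ 2) :=
        le_trans h1 h2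
      rw [hc]
      nlinarith [this]
    have : (inner ℝ w (z - y) : ℝ) ≤ f z - f y - c := by
      refine le_of_forall_pos_le_add ?_
      intro ε hε
      have ht0 : 0 < min (ε / c) (1/2) := by
        apply lt_min (div_pos hε hcpos); norm_num
      have ht1 : min (ε / c) (1/2) < 1 := lt_of_le_of_lt (min_le_right _ _) (by norm_num)
      have := key _ ht0 ht1
      have hct : c * min (ε / c) (1/2) ≤ ε := by
        calc c * min (ε / c) (1/2) ≤ c * (ε / c) :=
              mul_le_mul_of_nonneg_left (min_le_left _ _) hcpos.le
          _ = ε := by field_simp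
      linarith
    linarith

theorem stmt1 {n : ℕ} (g h : EuclideanSpace ℝ (Fin n) → ℝ) (σ : ℝ) (hσ : 0 < σ)
    (hgs : StrongConvexWith σ g) (hhs : StrongConvexWith σ h)
    (x y w : EuclideanSpace ℝ (Fin n))
    (hwx : w ∈ subdiff h x) (hwy : w ∈ subdiff g y) :
    g y - h y ≤ (g x - h x) - σ * ‖y - x‖ ^ 2 := by
  have hg := strong_subdiff g σ hσ hgs y w hwy x
  have hh := strong_subdiff h σ hσ hhs x w hwx y
  have hinner : (inner ℝ w (x - y) : ℝ) = - (inner ℝ w (y - x) : ℝ) := by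
    rw [← inner_neg_right]; congr 1; abel
  have hnorm : ‖x - y‖ = ‖y - x‖ := norm_sub_rev x y
  rw [hinner, hnorm] at hg
  linarith
end
end

section
/- Let g, h : ℝⁿ → ℝ be strongly convex with modulus σ > 0, let x, y ∈ ℝⁿ, set d := y − x, and let w ∈ ∂h(x) ∩ ∂g(y). Then for every λ ∈ (0, 1], φ(y + λ d) − φ(y) ≤ −(3σ/2) λ ‖d‖² + λ ( g(y + d) + g(x) − 2 g(y) ), where φ = g − h. -/
open Set Filter Topology

noncomputable section

theorem stmt3 {n : ℕ} (g h : EuclideanSpace ℝ (Fin n) → ℝ) (σ : ℝ) (hσ : 0 < σ)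
    (hgs : StrongConvexWith σ g) (hhs : StrongConvexWith σ h)
    (x y w : EuclideanSpace ℝ (Fin n))
    (hw : w ∈ subdiff h x ∩ subdiff g y) :
    ∀ lam : ℝ, 0 < lam → lam ≤ 1 →
      (g (y + lam • (y - x)) - h (y + lam • (y - x))) - (g y - h y) ≤
        -(3 * σ / 2) * lam * ‖y - x‖ ^ 2 + lam * (g (y + (y - x)) + g x - 2 * g y) := by
  obtain ⟨hw1, hw2⟩ := hw
  intro lam hl0 hl1
  set d := y - x with hd
  set N := ‖d‖ ^ 2 with hN
  set W := (inner ℝ w d : ℝ) with hW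
  set z := y + lam • d with hz
  have hN0 : (0 : ℝ) ≤ N := by positivity
  have hpos : (0 : ℝ) < 1 + lam := by linarith
  -- (3a) strong subgradient (with σ/4) for h at x evaluated at y
  have h3a : W + σ / 4 * N ≤ h y - h x := by
    have hm := hhs x y (1/2) (by norm_num) (by norm_num)
    have hs := hw1 ((1/2 : ℝ) • x + (1/2 : ℝ) • y)
    have he : ((1/2 : ℝ) • x + (1/2 : ℝ) • y) - x = (1/2 : ℝ) • d := by
      rw [hd]; module
    rw [he, real_inner_smul_right] at hs
    have hxy : ‖x - y‖ = ‖d‖ := by rw [hd, norm_sub_rev]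
    rw [hxy] at hm
    rw [← hW] at hs
    nlinarith [hm, hs]
  -- (3b) strong subgradient (with σ/4) for g at y evaluated at x
  have h3b : g y - W + σ / 4 * N ≤ g x := by
    have hm := hgs y x (1/2) (by norm_num) (by norm_num)
    have hs := hw2 ((1/2 : ℝ) • y + (1/2 : ℝ) • x)
    have he : ((1/2 : ℝ) • y + (1/2 : ℝ) • x) - y = -((1/2 : ℝ) • d) := by
      rw [hd]; module
    rw [he, inner_neg_right, real_inner_smul_right] at hs
    rw [← hW] at hs
    nlinarith [hm, hs]
  -- (1) strong convexity of g between y+d and y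
  have h1 : g z ≤ lam * g (y + d) + (1 - lam) * g y - σ / 2 * (lam * (1 - lam) * N) := by
    rcases eq_or_lt_of_le hl1 with he1 | hl1'
    · subst he1
      have hzyd : z = y + d := by rw [hz, one_smul]
      rw [hzyd]; norm_num
    · have hm := hgs (y + d) y lam hl0 hl1'
      have he : lam • (y + d) + (1 - lam) • y = z := by rw [hz]; module
      have hn : y + d - y = d := by abel
      rw [he, hn, ← hN] at hm
      exact hm
  -- (2) strong convexity of h: y between z and x
  have h2 : (1 + lam) * h y ≤ h z + lam * h x - σ / 2 * (lam * (1 + lam) * N) := by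
    have ht0 : (0 : ℝ) < 1 / (1 + lam) := by positivity
    have ht1 : 1 / (1 + lam) < 1 := by
      rw [div_lt_one hpos]; linarith
    have hm := hhs z x (1 / (1 + lam)) ht0 ht1
    have he : (1 / (1 + lam) : ℝ) • z + (1 - 1 / (1 + lam)) • x = y := by
      rw [hz, hd]
      match_scalars <;> field_simp <;> ring
    have hzx : z - x = (1 + lam) • d := by rw [hz, hd]; module
    rw [he, hzx, norm_smul] at hm
    have hsc : 1 / (1 + lam) * (1 - 1 / (1 + lam)) * (‖(1 + lam : ℝ)‖ * ‖d‖) ^ 2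
        = lam * N := by
      rw [Real.norm_eq_abs, abs_of_pos hpos, hN]
      field_simp
      ring
    rw [hsc] at hm
    have hrhs : 1 / (1 + lam) * h z + (1 - 1 / (1 + lam)) * h x - σ / 2 * (lam * N)
        = (h z + lam * h x - σ / 2 * (lam * (1 + lam) * N)) / (1 + lam) := by
      field_simp
      ring
    rw [hrhs] at hm
    have := (le_div_iff₀ hpos).mp hm
    linarith
  have h3a' := mul_le_mul_of_nonneg_left h3a hl0.le
  have h3b' := mul_le_mul_of_nonneg_left h3b hl0.le
  nlinarith [h1, h2, h3a', h3b']
end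
end

section
/- Let g, h : ℝⁿ → ℝ be strongly convex with modulus σ > 0, let ρ > 0 and ν > 0, let x, y ∈ ℝⁿ with d := y − x ≠ 0, and let w ∈ ∂h(x) ∩ ∂g(y). Then δ̂ := ν / ( g(y + d) + g(x) − 2 g(y) ) > 0, and for δ := min{ δ̂, 1, 3σ/(2ρ) } one has φ(y + λ d) ≤ φ(y) − ρ λ² ‖d‖² + ν for every λ ∈ (0, δ], where φ = g − h. Consequently the non-monotone line search of nmBDCA is well-defined. -/
open Set Filter Topology

noncomputable section

/-- Strong subgradient inequality: for a strongly convex `f` with `w ∈ ∂f(p)`,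
`f z ≥ f p + ⟨w, z - p⟩ + (σ/2)‖z - p‖²`. -/
lemma strong_subgrad {n : ℕ} {f : EuclideanSpace ℝ (Fin n) → ℝ} {σ : ℝ} (hσ : 0 < σ)
    (hf : StrongConvexWith σ f) {p w : EuclideanSpace ℝ (Fin n)} (hw : w ∈ subdiff f p)
    (z : EuclideanSpace ℝ (Fin n)) :
    f p + (inner ℝ w (z - p) : ℝ) + σ / 2 * ‖z - p‖ ^ 2 ≤ f z := by
  by_cases hz : z = p
  · subst hz; simpa using hw p
  have hzp : z - p ≠ 0 := sub_ne_zero.2 hz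
  have hr : 0 < ‖z - p‖ ^ 2 := pow_pos (norm_pos_iff.mpr hzp) 2
  set r := ‖z - p‖ ^ 2 with hrdef
  refine le_of_forall_pos_le_add ?_
  intro ε hε
  set t : ℝ := min (1/2) (ε / (σ * r)) with ht
  have ht0 : 0 < t := lt_min (by norm_num) (by positivity)
  have ht1 : t < 1 := lt_of_le_of_lt (min_le_left _ _) (by norm_num)
  have htε : t * (σ * r) ≤ ε := by
    rw [← le_div_iff₀ (by positivity)]
    exact min_le_right _ _
  have key := hf z p t ht0 ht1
  have heq : t • z + (1 - t) • p = p + t • (z - p) := by module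
  have hsub := hw (p + t • (z - p))
  have hinner : (inner ℝ w ((p + t • (z - p)) - p) : ℝ) = t * (inner ℝ w (z - p) : ℝ) := by
    rw [show (p + t • (z - p)) - p = t • (z - p) by module, real_inner_smul_right]
  rw [hinner] at hsub
  rw [heq, ← hrdef] at key
  -- key : f (p + t • (z-p)) ≤ t * f z + (1-t) * f p - σ/2 * (t*(1-t)*r)
  -- hsub : f p + t * c ≤ f (p + t • (z-p))
  nlinarith [mul_pos ht0 hr, mul_pos hσ hr, ht0, htε, sq_nonneg t, mul_pos ht0 (mul_pos hσ hr)]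

set_option maxHeartbeats 1000000 in
theorem stmt4 {n : ℕ} (g h : EuclideanSpace ℝ (Fin n) → ℝ) (σ ρ ν : ℝ)
    (hσ : 0 < σ) (hρ : 0 < ρ) (hν : 0 < ν)
    (hgs : StrongConvexWith σ g) (hhs : StrongConvexWith σ h)
    (x y w : EuclideanSpace ℝ (Fin n)) (hd : y - x ≠ 0)
    (hw : w ∈ subdiff h x ∩ subdiff g y) :
    0 < ν / (g (y + (y - x)) + g x - 2 * g y) ∧
      ∀ lam : ℝ, 0 < lam →
        lam ≤ min (min (ν / (g (y + (y - x)) + g x - 2 * g y)) 1) (3 * σ / (2 * ρ)) →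
        g (y + lam • (y - x)) - h (y + lam • (y - x)) ≤
          (g y - h y) - ρ * lam ^ 2 * ‖y - x‖ ^ 2 + ν := by
  have hr : 0 < ‖y - x‖ ^ 2 := pow_pos (norm_pos_iff.mpr hd) 2
  set r := ‖y - x‖ ^ 2 with hrdef
  -- D ≥ σ r > 0
  have hmid := hgs (y + (y - x)) x (1/2) (by norm_num) (by norm_num)
  rw [show (1/2 : ℝ) • (y + (y - x)) + (1 - 1/2 : ℝ) • x = y by module] at hmid
  have hn4 : ‖(y + (y - x)) - x‖ ^ 2 = 4 * r := by
    rw [show (y + (y - x)) - x = (2:ℝ) • (y - x) by module, norm_smul, hrdef]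
    norm_num [mul_pow]
  rw [hn4] at hmid
  have hD : σ * r ≤ g (y + (y - x)) + g x - 2 * g y := by nlinarith
  have hDpos : 0 < g (y + (y - x)) + g x - 2 * g y := lt_of_lt_of_le (by positivity) hD
  refine ⟨div_pos hν hDpos, ?_⟩
  intro lam hl hlam
  obtain ⟨hlam1, hlam3⟩ := le_min_iff.mp hlam
  obtain ⟨hlamD, hlam2⟩ := le_min_iff.mp hlam1
  have hlD : lam * (g (y + (y - x)) + g x - 2 * g y) ≤ ν :=
    (le_div_iff₀ hDpos).mp hlamD
  have hrl : 2 * ρ * lam ≤ 3 * σ := by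
    rw [le_div_iff₀ (by positivity : (0:ℝ) < 2 * ρ)] at hlam3
    linarith
  -- (i) convexity bound for g
  have hg1 : g (y + lam • (y - x)) ≤
      lam * g (y + (y - x)) + (1 - lam) * g y - σ / 2 * (lam * (1 - lam) * r) := by
    rcases lt_or_eq_of_le hlam2 with hlt | heq
    · have := hgs (y + (y - x)) y lam hl hlt
      rw [show lam • (y + (y - x)) + (1 - lam) • y = y + lam • (y - x) by module,
        show (y + (y - x)) - y = y - x by module] at this
      exact this
    · rw [heq]; ring_nf; simp
  -- (ii) strong subgradient of h at x applied to y + lam d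
  have hh1 := strong_subgrad hσ hhs hw.1 (y + lam • (y - x))
  rw [show (y + lam • (y - x)) - x = (1 + lam) • (y - x) by module,
    real_inner_smul_right, norm_smul] at hh1
  have habs : |1 + lam| = 1 + lam := abs_of_pos (by linarith)
  rw [Real.norm_eq_abs, habs, mul_pow, ← hrdef] at hh1
  -- (iii) strong convexity of h: y is a convex combination of y + lam d and x
  have hpl : (0:ℝ) < 1 + lam := by linarith
  have hhc := hhs (y + lam • (y - x)) x ((1 + lam)⁻¹) (by positivity)
    (inv_lt_one_of_one_lt₀ (by linarith))
  rw [show ((1 + lam)⁻¹ : ℝ) • (y + lam • (y - x)) + (1 - (1 + lam)⁻¹) • x = y by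
      match_scalars <;> field_simp <;> ring,
    show (y + lam • (y - x)) - x = (1 + lam) • (y - x) by module, norm_smul,
    Real.norm_eq_abs, habs, mul_pow, ← hrdef] at hhc
  have key : (1 + lam) * h y ≤
      h (y + lam • (y - x)) + lam * h x - σ / 2 * (lam * r) * (1 + lam) := by
    have h2 := mul_le_mul_of_nonneg_left hhc hpl.le
    have h3 : (1 + lam) * ((1 + lam)⁻¹ * h (y + lam • (y - x)) +
        (1 - (1 + lam)⁻¹) * h x -
        σ / 2 * ((1 + lam)⁻¹ * (1 - (1 + lam)⁻¹) * ((1 + lam) ^ 2 * r))) =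
        h (y + lam • (y - x)) + lam * h x - σ / 2 * (lam * r) * (1 + lam) := by
      field_simp
      ring
    linarith [h3 ▸ h2]
  -- (iv) plain subgradient of g at y applied to x
  have hg2 := hw.2 x
  rw [show x - y = -(y - x) by module, inner_neg_right] at hg2
  set c : ℝ := (inner ℝ w (y - x) : ℝ) with hc
  have hg2l : lam * g y - lam * c ≤ lam * g x := by
    have := mul_le_mul_of_nonneg_left hg2 hl.le
    linarith [this]
  have hkey2 : h y ≤ h (y + lam • (y - x)) - lam * c - σ / 2 * ((2 * lam + lam ^ 2) * r) := by
    have hh1l := mul_le_mul_of_nonneg_left hh1 hl.le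
    have step : (1 + lam) * h y ≤
        (1 + lam) * (h (y + lam • (y - x)) - lam * c - σ / 2 * ((2 * lam + lam ^ 2) * r)) := by
      nlinarith [key, hh1l]
    exact le_of_mul_le_mul_left step hpl
  have H1 : ρ * lam ^ 2 * r ≤ 3 / 2 * σ * lam * r := by
    have h1 : ρ * lam ≤ 3 / 2 * σ := by linarith
    have h2 : 0 ≤ lam * r := mul_nonneg hl.le hr.le
    calc ρ * lam ^ 2 * r = (ρ * lam) * (lam * r) := by ring
      _ ≤ (3 / 2 * σ) * (lam * r) := mul_le_mul_of_nonneg_right h1 h2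
      _ = 3 / 2 * σ * lam * r := by ring
  have hlD' : lam * g (y + (y - x)) + lam * g x - 2 * (lam * g y) ≤ ν := by
    linarith [hlD]
  clear_value r c
  linarith [hg1, hkey2, hg2l, hlD', H1]
end
end

section
/- Let (f_k)_{k∈ℕ} be a real sequence bounded below by φ* ∈ ℝ, let (ν_k)_{k∈ℕ} ⊂ [0, ∞), and let δ_min ∈ (0, 1) and (δ_{k+1})_{k∈ℕ} ⊂ [δ_min, 1] be such that for every k: f_k − f_{k+1} + ν_k ≥ 0 and ν_{k+1} ≤ (1 − δ_{k+1}) ( f_k − f_{k+1} + ν_k ). Then the series ∑_{k=0}^{∞} ν_k converges, with ∑_{k=0}^{∞} ν_k ≤ ν_0 + ((1 − δ_min)/δ_min) ( f_0 − φ* + ν_0 ). (Here f_k plays the role of φ(x^k) for the nmBDCA iterates; this shows that strategy (S1) with δ_min > 0 implies the summability condition (S2).) -/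
open Set Filter Topology

noncomputable section

theorem stmt6 (f ν δ : ℕ → ℝ) (φs δmin : ℝ)
    (hbd : ∀ k, φs ≤ f k) (hν : ∀ k, 0 ≤ ν k)
    (hδmin0 : 0 < δmin) (hδmin1 : δmin < 1)
    (hδ : ∀ k, δmin ≤ δ (k + 1) ∧ δ (k + 1) ≤ 1)
    (hpos : ∀ k, 0 ≤ f k - f (k + 1) + ν k)
    (hrec : ∀ k, ν (k + 1) ≤ (1 - δ (k + 1)) * (f k - f (k + 1) + ν k)) :
    Summable ν ∧ ∑' k, ν k ≤ ν 0 + (1 - δmin) / δmin * (f 0 - φs + ν 0) := by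
  set C := f 0 - φs + ν 0 with hC
  have hC0 : 0 ≤ C := by have := hbd 0; have := hν 0; simp [hC]; linarith
  have hsum_a : ∀ M, ∑ k ∈ Finset.range M, (f k - f (k + 1) + ν k) ≤ C / δmin := by
    intro M
    rw [le_div_iff₀ hδmin0]
    have h1 : ∑ k ∈ Finset.range M, δmin * (f k - f (k + 1) + ν k) ≤ C := by
      calc ∑ k ∈ Finset.range M, δmin * (f k - f (k + 1) + ν k)
          ≤ ∑ k ∈ Finset.range M, ((f k + ν k) - (f (k + 1) + ν (k + 1))) := by
            apply Finset.sum_le_sum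
            intro k _
            have h2 := hrec k
            have h3 := hpos k
            have h4 := (hδ k).1
            nlinarith
        _ = (f 0 + ν 0) - (f M + ν M) := Finset.sum_range_sub' (fun k => f k + ν k) M
        _ ≤ C := by have := hbd M; have := hν M; simp [hC]; linarith
    calc (∑ k ∈ Finset.range M, (f k - f (k + 1) + ν k)) * δmin
        = ∑ k ∈ Finset.range M, δmin * (f k - f (k + 1) + ν k) := by
          rw [Finset.sum_mul]; congr 1; ext k; ring
      _ ≤ C := h1
  have hb : ∀ N, ∑ k ∈ Finset.range N, ν k ≤ ν 0 + (1 - δmin) / δmin * C := by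
    intro N
    have haux : 0 ≤ (1 - δmin) / δmin * C := by
      apply mul_nonneg (div_nonneg (by linarith) hδmin0.le) hC0
    cases N with
    | zero => simp; linarith [hν 0]
    | succ M =>
      rw [Finset.sum_range_succ']
      have h5 : ∑ k ∈ Finset.range M, ν (k + 1)
          ≤ ∑ k ∈ Finset.range M, (1 - δmin) * (f k - f (k + 1) + ν k) := by
        apply Finset.sum_le_sum
        intro k _
        have h2 := hrec k
        have h3 := hpos k
        have h4 := (hδ k).1
        nlinarith
      have h6 : ∑ k ∈ Finset.range M, (1 - δmin) * (f k - f (k + 1) + ν k)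
          ≤ (1 - δmin) * (C / δmin) := by
        rw [← Finset.mul_sum]
        exact mul_le_mul_of_nonneg_left (hsum_a M) (by linarith)
      have h7 : (1 - δmin) * (C / δmin) = (1 - δmin) / δmin * C := by ring
      linarith
  exact ⟨summable_of_sum_range_le hν hb, Summable.tsum_le_of_sum_range_le (summable_of_sum_range_le hν hb) hb⟩
end
end

section
/- Let (f_k)_{k∈ℕ} be a real sequence bounded below by φ* ∈ ℝ, let (ν_k)_{k∈ℕ} ⊂ [0, ∞), and suppose that for every k: f_k − f_{k+1} + ν_k ≥ 0 and ν_{k+1} ≤ (1 − δ_{k+1}) ( f_k − f_{k+1} + ν_k ) for some δ_{k+1} ∈ [0, 1]. Then the sequence ( f_k + ν_k )_{k∈ℕ} is non-increasing and convergent. (Here f_k plays the role of φ(x^k) for the nmBDCA iterates, where φ is bounded below; this is the monotonicity result under strategy (S1).) -/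
open Set Filter Topology

noncomputable section

theorem stmt7 (f ν δ : ℕ → ℝ) (φs : ℝ)
    (hbd : ∀ k, φs ≤ f k) (hν : ∀ k, 0 ≤ ν k)
    (hδ : ∀ k, 0 ≤ δ (k + 1) ∧ δ (k + 1) ≤ 1)
    (hpos : ∀ k, 0 ≤ f k - f (k + 1) + ν k)
    (hrec : ∀ k, ν (k + 1) ≤ (1 - δ (k + 1)) * (f k - f (k + 1) + ν k)) :
    Antitone (fun k => f k + ν k) ∧
      ∃ l : ℝ, Filter.Tendsto (fun k => f k + ν k) Filter.atTop (nhds l) := by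
  have hmono : Antitone (fun k => f k + ν k) := by
    apply antitone_nat_of_succ_le
    intro k
    have h1 := hrec k
    have h2 := hpos k
    have h3 := (hδ k).1
    nlinarith [mul_nonneg h3 h2]
  refine ⟨hmono, ?_⟩
  have hbdd : BddBelow (Set.range fun k => f k + ν k) := by
    refine ⟨φs, ?_⟩
    rintro x ⟨k, rfl⟩
    have := hbd k; have := hν k
    show φs ≤ f k + ν k
    linarith
  exact ⟨_, tendsto_atTop_ciInf hmono hbdd⟩
end
end

section
/- Let g, h : ℝⁿ → ℝ be convex, and let (x^k), (y^k), (w^k) be sequences in ℝⁿ with w^k ∈ ∂h(x^k) and w^k ∈ ∂g(y^k) for every k, and set d^k := y^k − x^k. If ‖d^k‖ → 0 as k → ∞ and x̄ is a cluster point of (x^k) (i.e. some subsequence x^{k_ℓ} → x̄), then there exists w̄ ∈ ∂g(x̄) ∩ ∂h(x̄); that is, every cluster point of (x^k) is a critical point of φ = g − h. -/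
open Set Filter Topology

noncomputable section

theorem stmt8 {n : ℕ} (g h : EuclideanSpace ℝ (Fin n) → ℝ)
    (hgconv : ConvexOn ℝ Set.univ g) (hhconv : ConvexOn ℝ Set.univ h)
    (x y w : ℕ → EuclideanSpace ℝ (Fin n))
    (hwh : ∀ k, w k ∈ subdiff h (x k)) (hwg : ∀ k, w k ∈ subdiff g (y k))
    (hd : Filter.Tendsto (fun k => ‖y k - x k‖) Filter.atTop (nhds 0))
    (xbar : EuclideanSpace ℝ (Fin n))
    (hcl : ∃ φ : ℕ → ℕ, StrictMono φ ∧
      Filter.Tendsto (fun ℓ => x (φ ℓ)) Filter.atTop (nhds xbar)) :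
    ∃ wbar, wbar ∈ subdiff g xbar ∩ subdiff h xbar := by
  obtain ⟨φ, hφmono, hφlim⟩ := hcl
  -- continuity of g and h
  have hconth : Continuous h := by
    rw [← continuousOn_univ]
    exact hhconv.continuousOn isOpen_univ
  have hcontg : Continuous g := by
    rw [← continuousOn_univ]
    exact hgconv.continuousOn isOpen_univ
  -- bounds for h on compact balls
  obtain ⟨a, _, hMa⟩ := (isCompact_closedBall xbar 2).exists_isMaxOn
    ⟨xbar, Metric.mem_closedBall_self (by norm_num)⟩ hconth.continuousOn
  obtain ⟨b, _, hmb⟩ := (isCompact_closedBall xbar 1).exists_isMinOn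
    ⟨xbar, Metric.mem_closedBall_self (by norm_num)⟩ hconth.continuousOn
  have hM : ∀ c ∈ Metric.closedBall xbar 2, h c ≤ h a := fun c hc => hMa hc
  have hm : ∀ c ∈ Metric.closedBall xbar 1, h b ≤ h c := fun c hc => hmb hc
  set M : ℝ := h a
  set m : ℝ := h b
  -- the key bound: a subgradient of h at a point near xbar has norm ≤ M - m
  have hbound : ∀ x' w' : EuclideanSpace ℝ (Fin n), ‖x' - xbar‖ ≤ 1 →
      w' ∈ subdiff h x' → ‖w'‖ ≤ M - m := by
    intro x' w' hx' hw'
    have hx'ball : x' ∈ Metric.closedBall xbar 1 := by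
      simpa [Metric.mem_closedBall, dist_eq_norm] using hx'
    rcases eq_or_ne w' 0 with rfl | hne
    · have h1 : m ≤ h x' := hm x' hx'ball
      have h2 : h x' ≤ M := hM x' (by
        simp only [Metric.mem_closedBall, dist_eq_norm] at hx'ball ⊢
        linarith)
      simp only [norm_zero]
      linarith
    · have hnorm : (0:ℝ) < ‖w'‖ := norm_pos_iff.mpr hne
      set z : EuclideanSpace ℝ (Fin n) := x' + (‖w'‖⁻¹ : ℝ) • w'
      have hzx : z - x' = (‖w'‖⁻¹ : ℝ) • w' := by simp [z]
      have hinner : (inner ℝ w' (z - x') : ℝ) = ‖w'‖ := by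
        rw [hzx, inner_smul_right, real_inner_self_eq_norm_sq]
        field_simp
      have hzball : z ∈ Metric.closedBall xbar 2 := by
        simp only [Metric.mem_closedBall, dist_eq_norm]
        have : z - xbar = (x' - xbar) + (‖w'‖⁻¹ : ℝ) • w' := by
          simp [z]; abel
        rw [this]
        calc ‖(x' - xbar) + (‖w'‖⁻¹ : ℝ) • w'‖ ≤ ‖x' - xbar‖ + ‖(‖w'‖⁻¹ : ℝ) • w'‖ :=
              norm_add_le _ _
          _ ≤ 1 + 1 := by
              refine add_le_add hx' ?_
              rw [norm_smul, norm_inv, norm_norm, inv_mul_cancel₀ hnorm.ne']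
          _ = 2 := by norm_num
      have := hw' z
      rw [hinner] at this
      have h1 : m ≤ h x' := hm x' hx'ball
      have h2 : h z ≤ M := hM z hzball
      linarith
  -- eventually x (φ ℓ) is within 1 of xbar
  have hclose : ∃ N, ∀ ℓ, N ≤ ℓ → ‖x (φ ℓ) - xbar‖ ≤ 1 := by
    have := (Metric.tendsto_atTop.mp hφlim) 1 (by norm_num)
    obtain ⟨N, hN⟩ := this
    exact ⟨N, fun ℓ hℓ => by
      have := hN ℓ hℓ
      rw [dist_eq_norm] at this
      linarith⟩
  obtain ⟨N, hN⟩ := hclose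
  -- extract a convergent subsequence of w
  have hmem : ∀ ℓ : ℕ, w (φ (N + ℓ)) ∈ Metric.closedBall (0 : EuclideanSpace ℝ (Fin n)) (M - m) := by
    intro ℓ
    simp only [Metric.mem_closedBall, dist_zero_right]
    exact hbound _ _ (hN _ (Nat.le_add_right N ℓ)) (hwh _)
  obtain ⟨wbar, _, ψ, hψmono, hψlim⟩ :=
    tendsto_subseq_of_bounded Metric.isBounded_closedBall hmem
  -- the diagonal subsequence
  set ρ : ℕ → ℕ := fun m => φ (N + ψ m) with hρ
  have hρtend : Tendsto (fun m => N + ψ m) atTop atTop :=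
    (StrictMono.tendsto_atTop (fun i j hij => by
      exact Nat.add_lt_add_left (hψmono hij) N))
  have hxρ : Tendsto (fun m => x (ρ m)) atTop (nhds xbar) := hφlim.comp hρtend
  have hwρ : Tendsto (fun m => w (ρ m)) atTop (nhds wbar) := hψlim
  have hρatTop : Tendsto ρ atTop atTop := (hφmono.tendsto_atTop).comp hρtend
  have hdρ : Tendsto (fun m => y (ρ m) - x (ρ m)) atTop (nhds 0) := by
    rw [tendsto_zero_iff_norm_tendsto_zero]
    exact hd.comp hρatTop
  have hyρ : Tendsto (fun m => y (ρ m)) atTop (nhds xbar) := by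
    have := hxρ.add hdρ
    simpa using this
  refine ⟨wbar, ?_, ?_⟩
  · -- wbar ∈ subdiff g xbar
    intro z
    have hlim : Tendsto (fun m => g (y (ρ m)) + (inner ℝ (w (ρ m)) (z - y (ρ m)) : ℝ))
        atTop (nhds (g xbar + (inner ℝ wbar (z - xbar) : ℝ))) := by
      exact ((hcontg.tendsto xbar).comp hyρ).add
        (hwρ.inner (tendsto_const_nhds.sub hyρ))
    exact le_of_tendsto hlim (Filter.Eventually.of_forall fun m => hwg (ρ m) z)
  · -- wbar ∈ subdiff h xbar
    intro z
    have hlim : Tendsto (fun m => h (x (ρ m)) + (inner ℝ (w (ρ m)) (z - x (ρ m)) : ℝ))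
        atTop (nhds (h xbar + (inner ℝ wbar (z - xbar) : ℝ))) := by
      exact ((hconth.tendsto xbar).comp hxρ).add
        (hwρ.inner (tendsto_const_nhds.sub hxρ))
    exact le_of_tendsto hlim (Filter.Eventually.of_forall fun m => hwh (ρ m) z)
end
end

section
/- Let g : ℝⁿ → ℝ be differentiable with ∇g Lipschitz continuous with constant L > 0, let h : ℝⁿ → ℝ be strongly convex with modulus σ > 0, and set φ := g − h. Let x, y ∈ ℝⁿ with d := y − x ≠ 0 and ∇g(y) ∈ ∂h(x), and let ρ > 0 and ν ≥ 0. If μ > 0 is such that the line-search condition fails at μ, i.e. φ(y + μ d) > φ(y) − ρ μ² ‖d‖² + ν, then μ > 2σ/(L + 2ρ). (Consequently, the backtracking stepsizes of nmBDCA satisfy λ_k ≥ λ_min := min{ λ_{−1}, 2ζσ/(L + 2ρ) } for all k.) -/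
open Set Filter Topology

noncomputable section

/-- Descent lemma for a function with Lipschitz gradient. -/
lemma descent_aux {n : ℕ} (g : EuclideanSpace ℝ (Fin n) → ℝ)
    (g' : EuclideanSpace ℝ (Fin n) → EuclideanSpace ℝ (Fin n)) (L : ℝ)
    (hgrad : ∀ z, HasGradientAt g (g' z) z)
    (hlip : ∀ u v, ‖g' u - g' v‖ ≤ L * ‖u - v‖) (u v : EuclideanSpace ℝ (Fin n)) :
    g v ≤ g u + (inner ℝ (g' u) (v - u) : ℝ) + L / 2 * ‖v - u‖ ^ 2 := by
  set c := v - u with hc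
  set I : ℝ := inner ℝ (g' u) c with hI
  set ψ : ℝ → ℝ := fun t => g (u + t • c) - t * I - L / 2 * t ^ 2 * ‖c‖ ^ 2 with hψ
  have hψd : ∀ t : ℝ, HasDerivAt ψ
      ((inner ℝ (g' (u + t • c)) c : ℝ) - I - L * t * ‖c‖ ^ 2) t := by
    intro t
    have hline : HasDerivAt (fun s : ℝ => u + s • c) c t := by
      simpa using ((hasDerivAt_id t).smul_const c).const_add u
    have h1 : HasDerivAt (fun s : ℝ => g (u + s • c)) ((inner ℝ (g' (u + t • c)) c : ℝ)) t := by
      have := ((hgrad (u + t • c)).hasFDerivAt.comp_hasDerivAt t hline)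
      simp at this
      exact this
    have h2 : HasDerivAt (fun s : ℝ => s * I) I t := hasDerivAt_mul_const I
    have h3 : HasDerivAt (fun s : ℝ => L / 2 * s ^ 2 * ‖c‖ ^ 2) (L * t * ‖c‖ ^ 2) t := by
      have := ((hasDerivAt_pow 2 t).const_mul (L / 2)).mul_const (‖c‖ ^ 2)
      convert this using 1
      exacts [rfl, rfl, by ring]
    exact (h1.sub h2).sub h3
  have hanti : AntitoneOn ψ (Icc 0 1) := by
    apply antitoneOn_of_deriv_nonpos (convex_Icc 0 1)
    · exact fun t _ => (hψd t).differentiableAt.continuousAt.continuousWithinAt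
    · exact fun t _ => (hψd t).differentiableAt.differentiableWithinAt
    · intro t ht
      rw [interior_Icc] at ht
      rw [(hψd t).deriv]
      have h4 : (inner ℝ (g' (u + t • c)) c : ℝ) - I = (inner ℝ (g' (u + t • c) - g' u) c : ℝ) := by
        rw [inner_sub_left]
      have h5 := real_inner_le_norm (g' (u + t • c) - g' u) c
      have h6 := hlip (u + t • c) u
      have h7 : ‖u + t • c - u‖ = t * ‖c‖ := by
        simp [norm_smul, abs_of_nonneg ht.1.le]
      rw [h7] at h6
      nlinarith [norm_nonneg c, norm_nonneg (g' (u + t • c) - g' u), ht.1.le]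
  have := hanti (left_mem_Icc.2 zero_le_one) (right_mem_Icc.2 zero_le_one) zero_le_one
  simp only [hψ, one_smul, zero_smul, add_zero, zero_mul, zero_pow, mul_zero, sub_zero,
    one_pow, mul_one, one_mul] at this
  have hv : u + c = v := by rw [hc]; abel
  rw [hv] at this
  linarith

set_option maxHeartbeats 1000000 in
theorem stmt16 {n : ℕ} (g h : EuclideanSpace ℝ (Fin n) → ℝ)
    (g' : EuclideanSpace ℝ (Fin n) → EuclideanSpace ℝ (Fin n)) (L σ ρ ν μ : ℝ)
    (hL : 0 < L) (hσ : 0 < σ) (hρ : 0 < ρ) (hν : 0 ≤ ν) (hμ : 0 < μ)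
    (hgrad : ∀ z, HasGradientAt g (g' z) z)
    (hlip : ∀ u v, ‖g' u - g' v‖ ≤ L * ‖u - v‖)
    (hhs : StrongConvexWith σ h)
    (x y : EuclideanSpace ℝ (Fin n)) (hd : y - x ≠ 0) (hgy : g' y ∈ subdiff h x)
    (hfail : g (y + μ • (y - x)) - h (y + μ • (y - x)) >
      (g y - h y) - ρ * μ ^ 2 * ‖y - x‖ ^ 2 + ν) :
    2 * σ / (L + 2 * ρ) < μ := by
  set d := y - x with hdd
  set K := ‖d‖ ^ 2 with hK
  have hdn : 0 < ‖d‖ := norm_pos_iff.2 hd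
  have hKpos : 0 < K := by positivity
  set w := g' y with hw
  set I : ℝ := inner ℝ w d with hIdef
  set z' := y + μ • d with hz'
  -- strengthened subgradient inequality at z'
  have hsub : h x + (inner ℝ w (z' - x) : ℝ) + σ / 2 * ‖z' - x‖ ^ 2 ≤ h z' := by
    have key : ∀ t : ℝ, t ∈ Ioo (0:ℝ) 1 →
        (inner ℝ w (z' - x) : ℝ) + σ / 2 * (1 - t) * ‖z' - x‖ ^ 2 ≤ h z' - h x := by
      intro t ht
      have h1 := hhs z' x t ht.1 ht.2
      have h2 := hgy (t • z' + (1 - t) • x)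
      have e : t • z' + (1 - t) • x - x = t • (z' - x) := by module
      rw [e, real_inner_smul_right] at h2
      nlinarith [ht.1, ht.2, mul_pos ht.1 (sub_pos.2 ht.2)]
    have hcont : Tendsto (fun t : ℝ => (inner ℝ w (z' - x) : ℝ) + σ / 2 * (1 - t) * ‖z' - x‖ ^ 2)
        (𝓝[>] (0:ℝ)) (𝓝 ((inner ℝ w (z' - x) : ℝ) + σ / 2 * (1 - 0) * ‖z' - x‖ ^ 2)) := by
      apply Tendsto.mono_left _ nhdsWithin_le_nhds
      exact (Continuous.tendsto (by continuity) 0)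
    have hle := le_of_tendsto hcont (by
      filter_upwards [Ioo_mem_nhdsGT_of_mem (Set.mem_Ico.2 ⟨le_refl (0:ℝ), zero_lt_one⟩)]
        with t ht using key t ht)
    have e0 : (1:ℝ) - 0 = 1 := by norm_num
    rw [e0, mul_one] at hle
    linarith
  -- simplify hsub
  have e2 : z' - x = (1 + μ) • d := by rw [hz', hdd]; module
  have e2n : ‖z' - x‖ ^ 2 = (1 + μ) ^ 2 * K := by
    rw [e2, norm_smul, Real.norm_eq_abs, abs_of_pos (by linarith : (0:ℝ) < 1 + μ)]
    ring
  rw [e2n, e2, real_inner_smul_right] at hsub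
  -- hsub : h x + (1+μ)*I + σ/2*((1+μ)^2*K) ≤ h z'
  -- strong convexity combination at y
  have hμ1 : (0:ℝ) < 1 + μ := by linarith
  have ht1 : (0:ℝ) < 1 / (1 + μ) := by positivity
  have ht2 : 1 / (1 + μ) < 1 := by rw [div_lt_one hμ1]; linarith
  have hcomb := hhs z' x (1 / (1 + μ)) ht1 ht2
  have ecomb : (1 / (1 + μ)) • z' + (1 - 1 / (1 + μ)) • x = y := by
    rw [hz', hdd]
    match_scalars <;> field_simp <;> ring
  rw [ecomb, e2n] at hcomb
  -- descent lemma
  have hdesc := descent_aux g g' L hgrad hlip y z'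
  have e3 : z' - y = μ • d := by rw [hz']; abel
  rw [e3, real_inner_smul_right] at hdesc
  have e3n : ‖μ • d‖ ^ 2 = μ ^ 2 * K := by
    rw [norm_smul, Real.norm_eq_abs, abs_of_pos hμ]; ring
  rw [e3n] at hdesc
  -- make everything opaque
  generalize hA : h y = A at hcomb hfail
  generalize hB : h z' = B at hcomb hfail hsub
  generalize hC : h x = C at hcomb hsub
  generalize hG : g y = G at hdesc hfail
  generalize hG2 : g z' = G2 at hdesc hfail
  generalize hII : (inner ℝ w d : ℝ) = J at hdesc hsub
  clear_value z' I K w d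
  -- clear denominators in hcomb
  have hcomb2 : (1 + μ) * A ≤ B + μ * C - σ / 2 * (μ * (1 + μ)) * K := by
    have h0 := mul_le_mul_of_nonneg_left hcomb hμ1.le
    have hne : (1 + μ) ≠ 0 := hμ1.ne'
    calc (1 + μ) * A ≤ (1 + μ) * (1 / (1 + μ) * B + (1 - 1 / (1 + μ)) * C -
        σ / 2 * (1 / (1 + μ) * (1 - 1 / (1 + μ)) * ((1 + μ) ^ 2 * K))) := h0
      _ = B + μ * C - σ / 2 * (μ * (1 + μ)) * K := by field_simp; ring
  -- combine
  rw [div_lt_iff₀ (by linarith : (0:ℝ) < L + 2 * ρ)]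
  nlinarith [hsub, hcomb2, hdesc, hfail, hKpos, mul_pos hμ hKpos,
    mul_pos (mul_pos hμ hμ) hKpos, mul_pos hσ (mul_pos hμ hKpos)]
end
end

section
/- Let g, h : ℝⁿ → ℝ be strongly convex with modulus σ > 0, with g differentiable, let φ := g − h satisfy φ* := inf_{x∈ℝⁿ} φ(x) > −∞, and let ρ > 0. Let sequences (x^k), (y^k) in ℝⁿ, stepsizes t_k and parameters ν_k ≥ 0 satisfy, for every k: ∇g(y^k) ∈ ∂h(x^k), d^k := y^k − x^k, x^{k+1} = y^k + t_k d^k, t_k ≥ t_min for a fixed t_min > 0, and φ(x^{k+1}) ≤ φ(x^k) − (σ + ρ t_k²) ‖d^k‖² + ν_k. Let 0 < ς < 1 and k₀ ∈ ℕ be such that ν_k ≤ ς (σ + ρ t_min²) ‖d^k‖² for all k ≥ k₀. Then for every N ∈ ℕ with N > k₀: min{ ‖d^k‖ : k = 0, 1, …, N−1 } ≤ ( √( φ(x^0) − φ* + ∑_{k=0}^{k₀−1} ν_k ) / √( (1 − ς)(σ + ρ t_min²) ) ) · (1/√N). -/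
open Set Filter Topology

noncomputable section

theorem stmt18 {n : ℕ} (g h : EuclideanSpace ℝ (Fin n) → ℝ)
    (g' : EuclideanSpace ℝ (Fin n) → EuclideanSpace ℝ (Fin n)) (σ ρ tmin : ℝ)
    (hσ : 0 < σ) (hρ : 0 < ρ) (htmin : 0 < tmin)
    (hgs : StrongConvexWith σ g) (hhs : StrongConvexWith σ h)
    (hgrad : ∀ z, HasGradientAt g (g' z) z)
    (hbd : BddBelow (Set.range fun z => g z - h z))
    (x y : ℕ → EuclideanSpace ℝ (Fin n)) (t ν : ℕ → ℝ)
    (hν : ∀ k, 0 ≤ ν k) (ht : ∀ k, tmin ≤ t k)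
    (hw : ∀ k, g' (y k) ∈ subdiff h (x k))
    (hstep : ∀ k, x (k + 1) = y k + t k • (y k - x k))
    (hdec : ∀ k, g (x (k + 1)) - h (x (k + 1)) ≤
      (g (x k) - h (x k)) - (σ + ρ * t k ^ 2) * ‖y k - x k‖ ^ 2 + ν k)
    (ς : ℝ) (hς0 : 0 < ς) (hς1 : ς < 1) (k₀ : ℕ)
    (hνk : ∀ k ≥ k₀, ν k ≤ ς * (σ + ρ * tmin ^ 2) * ‖y k - x k‖ ^ 2) :
    ∀ N : ℕ, k₀ < N → ∃ k < N, ‖y k - x k‖ ≤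
      Real.sqrt ((g (x 0) - h (x 0)) - (⨅ z, (g z - h z)) + ∑ k ∈ Finset.range k₀, ν k) /
        Real.sqrt ((1 - ς) * (σ + ρ * tmin ^ 2)) * (1 / Real.sqrt N) := by
  intro N hN
  set φ : ℕ → ℝ := fun k => g (x k) - h (x k) with hφ
  set c : ℝ := (1 - ς) * (σ + ρ * tmin ^ 2) with hc
  have hbase : 0 < σ + ρ * tmin ^ 2 := by positivity
  have hc0 : 0 < c := by
    have : 0 < 1 - ς := by linarith
    positivity
  -- per-step inequality
  have key : ∀ k, c * ‖y k - x k‖ ^ 2 ≤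
      (φ k - φ (k + 1)) + (if k < k₀ then ν k else 0) := by
    intro k
    have hd2 : (0 : ℝ) ≤ ‖y k - x k‖ ^ 2 := by positivity
    have htk : tmin ≤ t k := ht k
    have ht2 : tmin ^ 2 ≤ t k ^ 2 := by nlinarith
    have hdk := hdec k
    by_cases hk : k < k₀
    · simp only [hk, if_pos]
      have hcle : c ≤ σ + ρ * t k ^ 2 := by nlinarith
      have := mul_le_mul_of_nonneg_right hcle hd2
      simp only [hφ]; nlinarith
    · simp only [hk, if_neg, not_false_iff]
      have hνle := hνk k (le_of_not_gt hk)
      simp only [hφ, hc]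
      nlinarith [mul_nonneg (mul_nonneg hρ.le (sub_nonneg.mpr ht2)) hd2]
  -- sum over range N
  have hsum : c * ∑ k ∈ Finset.range N, ‖y k - x k‖ ^ 2 ≤
      (φ 0 - φ N) + ∑ k ∈ Finset.range k₀, ν k := by
    rw [Finset.mul_sum]
    have h1 : ∑ k ∈ Finset.range N, (c * ‖y k - x k‖ ^ 2) ≤
        ∑ k ∈ Finset.range N, ((φ k - φ (k + 1)) + (if k < k₀ then ν k else 0)) :=
      Finset.sum_le_sum fun k _ => key k
    rw [Finset.sum_add_distrib, Finset.sum_range_sub' φ] at h1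
    have h2 : ∑ k ∈ Finset.range N, (if k < k₀ then ν k else 0) =
        ∑ k ∈ Finset.range k₀, ν k := by
      rw [← Finset.sum_filter]
      congr 1
      ext k
      simp only [Finset.mem_filter, Finset.mem_range]
      constructor
      · rintro ⟨_, hk⟩; exact hk
      · intro hk; exact ⟨lt_trans hk hN, hk⟩
    rw [h2] at h1
    exact h1
  -- bound φ N from below
  have hinf : (⨅ z, (g z - h z)) ≤ φ N := ciInf_le hbd (x N)
  set A : ℝ := (g (x 0) - h (x 0)) - (⨅ z, (g z - h z)) + ∑ k ∈ Finset.range k₀, ν k with hA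
  have hsumA : c * ∑ k ∈ Finset.range N, ‖y k - x k‖ ^ 2 ≤ A := by
    have : φ 0 - φ N ≤ (g (x 0) - h (x 0)) - (⨅ z, (g z - h z)) := by
      simp only [hφ] at hinf ⊢; linarith
    linarith
  -- pick the minimizer
  have hNne : (Finset.range N).Nonempty := ⟨0, Finset.mem_range.mpr (Nat.zero_lt_of_lt hN)⟩
  obtain ⟨k', hk'mem, hk'min⟩ :=
    Finset.exists_min_image (Finset.range N) (fun k => ‖y k - x k‖) hNne
  refine ⟨k', Finset.mem_range.mp hk'mem, ?_⟩
  have hcard : (N : ℝ) * ‖y k' - x k'‖ ^ 2 ≤ ∑ k ∈ Finset.range N, ‖y k - x k‖ ^ 2 := by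
    have : ∀ k ∈ Finset.range N, ‖y k' - x k'‖ ^ 2 ≤ ‖y k - x k‖ ^ 2 := by
      intro k hk
      exact pow_le_pow_left₀ (norm_nonneg _) (hk'min k hk) 2
    calc (N : ℝ) * ‖y k' - x k'‖ ^ 2
        = ∑ _k ∈ Finset.range N, ‖y k' - x k'‖ ^ 2 := by
          rw [Finset.sum_const, Finset.card_range, nsmul_eq_mul]
      _ ≤ ∑ k ∈ Finset.range N, ‖y k - x k‖ ^ 2 := Finset.sum_le_sum this
  have hNpos : (0 : ℝ) < N := by
    have : 0 < N := Nat.zero_lt_of_lt hN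
    exact_mod_cast this
  have hmain : c * ((N : ℝ) * ‖y k' - x k'‖ ^ 2) ≤ A := by
    have := mul_le_mul_of_nonneg_left hcard (le_of_lt hc0)
    linarith
  have hA0 : 0 ≤ A := by
    have hx : 0 ≤ c * ((N : ℝ) * ‖y k' - x k'‖ ^ 2) := by positivity
    linarith
  have hbound : ‖y k' - x k'‖ ^ 2 ≤ A / (c * N) := by
    rw [le_div_iff₀ (by positivity)]
    nlinarith
  calc ‖y k' - x k'‖ = Real.sqrt (‖y k' - x k'‖ ^ 2) := (Real.sqrt_sq (norm_nonneg _)).symm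
    _ ≤ Real.sqrt (A / (c * N)) := Real.sqrt_le_sqrt hbound
    _ = Real.sqrt A / Real.sqrt c * (1 / Real.sqrt N) := by
        rw [Real.sqrt_div hA0, Real.sqrt_mul (le_of_lt hc0)]
        ring
end
end

section
/- Let g, h : ℝⁿ → ℝ be strongly convex with modulus σ > 0, with g differentiable, set φ := g − h, and let ρ > 0, λ_{−1} > 0. Let sequences (x^k), (y^k) in ℝⁿ, stepsizes t_k ∈ (0, λ_{−1}] and parameters ν_k ≥ 0 satisfy, for every k: ∇g(y^k) ∈ ∂h(x^k), d^k := y^k − x^k, x^{k+1} = y^k + t_k d^k, and φ(x^{k+1}) ≤ φ(x^k) − (σ + ρ t_k²) ‖d^k‖² + ν_k. Assume: (a) the parameters satisfy strategy (S3), i.e. for every δ > 0 there exists k₀ with ν_k ≤ δ ‖d^k‖² for all k ≥ k₀; (b) x* is a cluster point of (x^k); (c) ∇g is Lipschitz continuous on a ball B(x*, δ̂) for some δ̂ > 0 with constant L > 0; and (d) φ satisfies the Kurdyka–Łojasiewicz property at x* with respect to the set-valued map x ↦ { ∇g(x) − s : s ∈ ∂h(x) }, i.e. there exist η ∈ (0,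 +∞], a neighborhood U of x*, and a continuous concave function γ : [0, η) → [0, ∞) with γ(0) = 0, γ continuously differentiable on (0, η) with γ′(t) > 0 for all t ∈ (0, η), such that γ′(φ(x) − φ(x*)) · dist( 0, { ∇g(x) − s : s ∈ ∂h(x) } ) ≥ 1 for every x ∈ U with φ(x*) < φ(x) < φ(x*) + η. Then the whole sequence (x^k) converges to x*, and x* is a critical point of φ, i.e. ∂g(x*) ∩ ∂h(x*) ≠ ∅. -/
open Set Filter Topology

noncomputable section

/-- generic one-sided slope bound -/
lemma slope_le_of_lt {ψ : ℝ → ℝ} {dd c : ℝ} (hd : HasDerivAt ψ dd 0)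
    (hb : ∀ t : ℝ, 0 < t → t < 1 → ψ t - ψ 0 ≤ t * c) : dd ≤ c := by
  have h1 : Tendsto (slope ψ 0) (𝓝[>] (0:ℝ)) (𝓝 dd) :=
    (hasDerivAt_iff_tendsto_slope.mp hd).mono_left
      (nhdsWithin_mono _ (fun t ht => ne_of_gt ht))
  refine le_of_tendsto h1 ?_
  filter_upwards [Ioo_mem_nhdsGT_of_mem (left_mem_Ico.mpr one_pos)] with t ht
  have h2 := hb t ht.1 ht.2
  have ht0 : (0:ℝ) < t := ht.1
  rw [slope_def_field, sub_zero, div_le_iff₀ ht0]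
  linarith

lemma convexOn_of_strong {n : ℕ} {σ : ℝ} (hσ : 0 ≤ σ)
    {f : EuclideanSpace ℝ (Fin n) → ℝ} (hf : StrongConvexWith σ f) :
    ConvexOn ℝ Set.univ f := by
  refine ⟨convex_univ, fun u _ v _ a b ha hb hab => ?_⟩
  rcases eq_or_lt_of_le ha with h0 | hpos
  · have hb1 : b = 1 := by linarith
    simp [← h0, hb1]
  · rcases eq_or_lt_of_le hb with h0 | hbpos
    · have ha1 : a = 1 := by linarith
      simp [← h0, ha1]
    · have ha1 : a < 1 := by linarith
      have hb' : b = 1 - a := by linarith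
      have h2 := hf u v a hpos ha1
      rw [hb']
      refine le_trans h2 ?_
      have : 0 ≤ σ / 2 * (a * (1 - a) * ‖u - v‖ ^ 2) := by
        apply mul_nonneg (by linarith)
        apply mul_nonneg (mul_nonneg hpos.le (by linarith)) (by positivity)
      simp only [smul_eq_mul]
      linarith

lemma grad_mem_subdiff {n : ℕ} {f : EuclideanSpace ℝ (Fin n) → ℝ}
    (hconv : ConvexOn ℝ Set.univ f) {v x : EuclideanSpace ℝ (Fin n)}
    (hg : HasGradientAt f v x) : v ∈ subdiff f x := by
  intro z
  set c : ℝ → EuclideanSpace ℝ (Fin n) := fun t => x + t • (z - x) with hc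
  have hcd : HasDerivAt c (z - x) 0 := by
    have := ((hasDerivAt_id' (0:ℝ)).smul_const (z - x)).const_add x
    rw [one_smul] at this
    exact this
  have hfd : HasFDerivAt f (InnerProductSpace.toDual ℝ _ v) x :=
    (hasGradientAt_iff_hasFDerivAt).mp hg
  have hc0 : c 0 = x := by simp [hc]
  have hcomp : HasDerivAt (f ∘ c) ((inner ℝ v (z - x) : ℝ)) 0 := by
    have hfd' : HasFDerivAt f (InnerProductSpace.toDual ℝ _ v) (c 0) := by rwa [hc0]
    have := hfd'.comp_hasDerivAt (0:ℝ) hcd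
    simpa [InnerProductSpace.toDual_apply_apply] using this
  have key : (inner ℝ v (z - x) : ℝ) ≤ f z - f x := by
    refine slope_le_of_lt hcomp ?_
    intro t ht0 ht1
    have hmix : c t = t • z + (1 - t) • x := by
      simp only [hc]
      module
    have h3 := hconv.2 (mem_univ z) (mem_univ x) ht0.le (by linarith : (0:ℝ) ≤ 1 - t)
      (by ring)
    rw [← hmix] at h3
    simp only [smul_eq_mul] at h3
    simp only [Function.comp_apply, hc0]
    calc f (c t) - f x ≤ t * f z + (1 - t) * f x - f x := by linarith
    _ = t * (f z - f x) := by ring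
  linarith

lemma concave_tangent_le {S : Set ℝ} {γ γ' : ℝ → ℝ} (hconc : ConcaveOn ℝ S γ)
    {a b : ℝ} (hderiv : HasDerivAt γ (γ' a) a) (hbS : b ∈ S) (haS : a ∈ S) :
    γ b ≤ γ a + γ' a * (b - a) := by
  have hl : HasDerivAt (fun t : ℝ => a + t * (b - a)) (b - a) 0 := by
    simpa using ((hasDerivAt_id (0:ℝ)).mul_const (b - a)).const_add a
  have hl0 : a + (0:ℝ) * (b - a) = a := by ring
  have hcomp : HasDerivAt (fun t : ℝ => -(γ (a + t * (b - a)))) (-(γ' a * (b - a))) 0 := by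
    have h1 : HasDerivAt γ (γ' a) (a + (0:ℝ) * (b - a)) := by rwa [hl0]
    exact (h1.comp (0:ℝ) hl).neg
  have key : -(γ' a * (b - a)) ≤ γ a - γ b := by
    refine slope_le_of_lt hcomp ?_
    intro t ht0 ht1
    have hcv := hconc.2 hbS haS ht0.le (by linarith : (0:ℝ) ≤ 1 - t) (by ring)
    simp only [smul_eq_mul] at hcv
    have harg : a + t * (b - a) = t * b + (1 - t) * a := by ring
    rw [harg, hl0]
    linarith
  linarith

set_option maxHeartbeats 1000000 in
theorem stmt19 {n : ℕ} (g h : EuclideanSpace ℝ (Fin n) → ℝ)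
    (g' : EuclideanSpace ℝ (Fin n) → EuclideanSpace ℝ (Fin n)) (σ ρ lamm1 : ℝ)
    (hσ : 0 < σ) (hρ : 0 < ρ) (hlamm1 : 0 < lamm1)
    (hgs : StrongConvexWith σ g) (hhs : StrongConvexWith σ h)
    (hgrad : ∀ z, HasGradientAt g (g' z) z)
    (x y : ℕ → EuclideanSpace ℝ (Fin n)) (t ν : ℕ → ℝ)
    (ht : ∀ k, 0 < t k ∧ t k ≤ lamm1) (hν : ∀ k, 0 ≤ ν k)
    (hw : ∀ k, g' (y k) ∈ subdiff h (x k))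
    (hstep : ∀ k, x (k + 1) = y k + t k • (y k - x k))
    (hdec : ∀ k, g (x (k + 1)) - h (x (k + 1)) ≤
      (g (x k) - h (x k)) - (σ + ρ * t k ^ 2) * ‖y k - x k‖ ^ 2 + ν k)
    (hS3 : ∀ δ : ℝ, 0 < δ → ∃ k₀ : ℕ, ∀ k ≥ k₀, ν k ≤ δ * ‖y k - x k‖ ^ 2)
    (xstar : EuclideanSpace ℝ (Fin n))
    (hcl : ∃ φ : ℕ → ℕ, StrictMono φ ∧
      Filter.Tendsto (fun ℓ => x (φ ℓ)) Filter.atTop (nhds xstar))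
    (δhat L : ℝ) (hδhat : 0 < δhat) (hL : 0 < L)
    (hlip : ∀ u ∈ Metric.ball xstar δhat, ∀ v ∈ Metric.ball xstar δhat,
      ‖g' u - g' v‖ ≤ L * ‖u - v‖)
    (η : ENNReal) (hη : 0 < η)
    (U : Set (EuclideanSpace ℝ (Fin n))) (hU : U ∈ nhds xstar)
    (γ γ' : ℝ → ℝ)
    (hγ0 : γ 0 = 0)
    (hγnonneg : ∀ s : ℝ, 0 ≤ s → ENNReal.ofReal s < η → 0 ≤ γ s)
    (hγcont : ContinuousOn γ {s : ℝ | 0 ≤ s ∧ ENNReal.ofReal s < η})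
    (hγconc : ConcaveOn ℝ {s : ℝ | 0 ≤ s ∧ ENNReal.ofReal s < η} γ)
    (hγderiv : ∀ s : ℝ, 0 < s → ENNReal.ofReal s < η → HasDerivAt γ (γ' s) s)
    (hγ'cont : ContinuousOn γ' {s : ℝ | 0 < s ∧ ENNReal.ofReal s < η})
    (hγ'pos : ∀ s : ℝ, 0 < s → ENNReal.ofReal s < η → 0 < γ' s)
    (hKL : ∀ z ∈ U, (g xstar - h xstar) < (g z - h z) →
      ENNReal.ofReal ((g z - h z) - (g xstar - h xstar)) < η →
      1 ≤ γ' ((g z - h z) - (g xstar - h xstar)) *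
        sInf {r : ℝ | ∃ s ∈ subdiff h z, r = ‖g' z - s‖}) :
    Filter.Tendsto x Filter.atTop (nhds xstar) ∧
      (subdiff g xstar ∩ subdiff h xstar).Nonempty := by
  classical
  obtain ⟨sub, hsubmono, hsubtend⟩ := hcl
  have hsubge : ∀ ℓ, ℓ ≤ sub ℓ := fun ℓ => hsubmono.le_apply
  have hgconv : ConvexOn ℝ Set.univ g := convexOn_of_strong hσ.le hgs
  have hhconv : ConvexOn ℝ Set.univ h := convexOn_of_strong hσ.le hhs
  have hhcont : Continuous h := by
    rw [← continuousOn_univ]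
    exact hhconv.continuousOn isOpen_univ
  have hgcont : Continuous g := continuous_iff_continuousAt.mpr fun z => (hgrad z).continuousAt
  have hgsub : g' xstar ∈ subdiff g xstar := grad_mem_subdiff hgconv (hgrad xstar)
  set d : ℕ → EuclideanSpace ℝ (Fin n) := fun k => y k - x k with hdd
  set r : ℕ → ℝ := fun k => (g (x k) - h (x k)) - (g xstar - h xstar) with hr
  clear_value d r
  obtain ⟨k₀, hk₀⟩ := hS3 (σ / 2) (by linarith)
  have hrdec : ∀ k, k₀ ≤ k → r (k + 1) ≤ r k - σ / 2 * ‖d k‖ ^ 2 := by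
    intro k hk
    have h1 := hdec k
    have h2 := hk₀ k hk
    have h3 : σ * ‖y k - x k‖ ^ 2 ≤ (σ + ρ * t k ^ 2) * ‖y k - x k‖ ^ 2 := by
      nlinarith [mul_nonneg (mul_nonneg hρ.le (sq_nonneg (t k))) (sq_nonneg ‖y k - x k‖)]
    simp only [hr, hdd]
    linarith
  have hranti : ∀ k₁ k₂, k₀ ≤ k₁ → k₁ ≤ k₂ → r k₂ ≤ r k₁ := by
    intro k₁ k₂ hk1 hle
    induction k₂, hle using Nat.le_induction with
    | base => exact le_refl _
    | succ m hm ih =>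
      have h1 := hrdec m (le_trans hk1 hm)
      have h2 : 0 ≤ σ / 2 * ‖d m‖ ^ 2 := by positivity
      linarith only [ih, h1, h2]
  have hΦcont : Continuous (fun z => g z - h z) := hgcont.sub hhcont
  have hrsub : Tendsto (fun ℓ => r (sub ℓ)) atTop (𝓝 0) := by
    have h1 : Tendsto (fun ℓ => g (x (sub ℓ)) - h (x (sub ℓ))) atTop
        (𝓝 (g xstar - h xstar)) := (hΦcont.tendsto xstar).comp hsubtend
    have h2 := h1.sub_const (g xstar - h xstar)
    simpa [hr] using h2
  have hrnn : ∀ k, k₀ ≤ k → 0 ≤ r k := by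
    intro k hk
    have hev : ∀ᶠ ℓ in atTop, r (sub ℓ) ≤ r k := by
      filter_upwards [eventually_ge_atTop k] with ℓ hℓ
      exact hranti k (sub ℓ) hk (le_trans hℓ (hsubge ℓ))
    exact le_of_tendsto hrsub hev
  have hrtend : Tendsto r atTop (𝓝 0) := by
    rw [Metric.tendsto_atTop]
    intro ε hε
    have h1 : ∀ᶠ ℓ in atTop, r (sub ℓ) < ε := hrsub.eventually (gt_mem_nhds hε)
    have h2 : ∀ᶠ ℓ in atTop, k₀ ≤ sub ℓ := by
      filter_upwards [eventually_ge_atTop k₀] with ℓ hℓ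
      exact le_trans hℓ (hsubge ℓ)
    obtain ⟨ℓ, hℓ1, hℓ2⟩ := (h1.and h2).exists
    refine ⟨sub ℓ, fun k hk => ?_⟩
    have h3 : r k ≤ r (sub ℓ) := hranti (sub ℓ) k hℓ2 hk
    have h4 : 0 ≤ r k := hrnn k (le_trans hℓ2 hk)
    rw [Real.dist_eq, sub_zero, abs_of_nonneg h4]
    linarith
  have hrtend1 : Tendsto (fun k => r (k + 1)) atTop (𝓝 0) :=
    hrtend.comp (tendsto_add_atTop_nat 1)
  have hdnorm2 : Tendsto (fun k => ‖d k‖ ^ 2) atTop (𝓝 0) := by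
    refine squeeze_zero' (g := fun k => (2 / σ) * (r k - r (k + 1)))
      (Eventually.of_forall fun k => by positivity) ?_ ?_
    · filter_upwards [eventually_ge_atTop k₀] with k hk
      have h1 := hrdec k hk
      have h2 : (2 / σ) * (σ / 2 * ‖d k‖ ^ 2) ≤ (2 / σ) * (r k - r (k + 1)) := by
        apply mul_le_mul_of_nonneg_left (by linarith) (by positivity)
      have h3 : ‖d k‖ ^ 2 = (2 / σ) * (σ / 2 * ‖d k‖ ^ 2) := by
        field_simp
      rw [h3]
      exact h2
    · have := (hrtend.sub hrtend1).const_mul (2 / σ)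
      simpa using this
  have hdtend : Tendsto (fun k => ‖d k‖) atTop (𝓝 0) := by
    have h1 := (Real.continuous_sqrt.tendsto 0).comp hdnorm2
    have heq : (fun k => Real.sqrt (‖d k‖ ^ 2)) = fun k => ‖d k‖ :=
      funext fun k => Real.sqrt_sq (norm_nonneg _)
    rw [show Real.sqrt 0 = 0 from Real.sqrt_zero] at h1
    rw [← heq]
    exact h1
  have hdtend0 : Tendsto d atTop (𝓝 0) := tendsto_zero_iff_norm_tendsto_zero.mpr hdtend
  have hytend_of : Tendsto x atTop (𝓝 xstar) → Tendsto y atTop (𝓝 xstar) := by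
    intro hx
    have h1 : Tendsto (fun k => x k + d k) atTop (𝓝 (xstar + 0)) := hx.add hdtend0
    have heq : (fun k => x k + d k) = y := funext fun k => by simp [hdd]
    rw [heq, add_zero] at h1
    exact h1
  -- reduce to convergence of x
  suffices hmain : Tendsto x atTop (𝓝 xstar) by
    have hy : Tendsto y atTop (𝓝 xstar) := hytend_of hmain
    refine ⟨hmain, g' xstar, hgsub, ?_⟩
    have hwtend : Tendsto (fun k => g' (y k)) atTop (𝓝 (g' xstar)) := by
      rw [tendsto_iff_norm_sub_tendsto_zero]
      refine squeeze_zero' (g := fun k => L * ‖y k - xstar‖)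
        (Eventually.of_forall fun k => norm_nonneg _) ?_ ?_
      · filter_upwards [hy.eventually (Metric.ball_mem_nhds xstar hδhat)] with k hk
        exact hlip (y k) hk xstar (Metric.mem_ball_self hδhat)
      · have h1 : Tendsto (fun k => ‖y k - xstar‖) atTop (𝓝 0) :=
          tendsto_iff_norm_sub_tendsto_zero.mp hy
        have := h1.const_mul L
        simpa using this
    intro z
    have hlhs : Tendsto (fun k => h (x k) + (inner ℝ (g' (y k)) (z - x k) : ℝ)) atTop
        (𝓝 (h xstar + (inner ℝ (g' xstar) (z - xstar) : ℝ))) := by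
      refine Tendsto.add ((hhcont.tendsto xstar).comp hmain) ?_
      exact hwtend.inner (tendsto_const_nhds.sub hmain)
    exact le_of_tendsto hlhs (Eventually.of_forall fun k => hw k z)
  by_cases hallpos : ∀ k, k₀ ≤ k → 0 < r k
  case neg =>
    push_neg at hallpos
    obtain ⟨K, hKk₀, hKle⟩ := hallpos
    have hK0 : r K = 0 := le_antisymm hKle (hrnn K hKk₀)
    have hconst : ∀ m, K ≤ m → x m = x K := by
      have haux : ∀ m, K ≤ m → x m = x K ∧ r m = 0 := by
        intro m hm
        induction m, hm using Nat.le_induction with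
        | base => exact ⟨rfl, hK0⟩
        | succ m hm ih =>
          have h1 := hrdec m (le_trans hKk₀ hm)
          have h2 := hrnn (m + 1) (le_trans hKk₀ (le_trans hm (Nat.le_succ m)))
          have hd0 : d m = 0 := by
            rw [ih.2] at h1
            have hnn : 0 ≤ σ / 2 * ‖d m‖ ^ 2 := by positivity
            have h3 : σ / 2 * ‖d m‖ ^ 2 = 0 := by linarith
            have h5 : ‖d m‖ ^ 2 = 0 :=
              (mul_eq_zero.mp h3).resolve_left (ne_of_gt (half_pos hσ))
            have h4 : ‖d m‖ = 0 := (pow_eq_zero_iff (by norm_num : 2 ≠ 0)).mp h5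
            exact norm_eq_zero.mp h4
          have hym : y m = x m := by
            simp only [hdd] at hd0
            exact sub_eq_zero.mp hd0
          have hx1 : x (m + 1) = x m := by
            rw [hstep m, hym]
            simp
          have hr1 : r (m + 1) = 0 := by
            simp only [hr, hx1]
            simp only [hr] at ih
            exact ih.2
          exact ⟨hx1.trans ih.1, hr1⟩
      exact fun m hm => (haux m hm).1
    have hxK : x K = xstar := by
      have h1 : Tendsto (fun ℓ => x (sub ℓ)) atTop (𝓝 (x K)) := by
        refine tendsto_const_nhds.congr' ?_
        filter_upwards [eventually_ge_atTop K] with ℓ hℓ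
        exact (hconst (sub ℓ) (le_trans hℓ (hsubge ℓ))).symm
      exact tendsto_nhds_unique h1 hsubtend
    refine tendsto_const_nhds.congr' ?_
    filter_upwards [eventually_ge_atTop K] with m hm
    exact ((hconst m hm).trans hxK).symm
  case pos =>
    obtain ⟨ε₀, hε₀, hballU⟩ := Metric.mem_nhds_iff.mp hU
    set ε := min ε₀ δhat with hεdef
    have hεpos : 0 < ε := lt_min hε₀ hδhat
    have hεU : Metric.ball xstar ε ⊆ U :=
      subset_trans (Metric.ball_subset_ball (min_le_left _ _)) hballU
    have hεδ : ε ≤ δhat := min_le_right _ _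
    set C := (1 + lamm1) * (2 * L / σ) with hC
    have hCpos : 0 < C := by positivity
    clear_value ε
    have hηev : ∀ᶠ k in atTop, ENNReal.ofReal (r k) < η := by
      rcases eq_or_ne η ⊤ with hT | hT
      · exact Eventually.of_forall fun k => hT ▸ ENNReal.ofReal_lt_top
      · have hpos' : 0 < η.toReal := ENNReal.toReal_pos hη.ne' hT
        filter_upwards [hrtend.eventually (gt_mem_nhds hpos')] with k h1
        calc ENNReal.ofReal (r k) < ENNReal.ofReal η.toReal :=
          (ENNReal.ofReal_lt_ofReal_iff hpos').mpr h1
        _ = η := ENNReal.ofReal_toReal hT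
    have hγr : Tendsto (fun k => γ (r k)) atTop (𝓝 0) := by
      have hc : ContinuousWithinAt γ {s : ℝ | 0 ≤ s ∧ ENNReal.ofReal s < η} 0 :=
        hγcont 0 ⟨le_refl 0, by simpa using hη⟩
      have hin : Tendsto r atTop (𝓝[{s : ℝ | 0 ≤ s ∧ ENNReal.ofReal s < η}] 0) := by
        rw [tendsto_nhdsWithin_iff]
        refine ⟨hrtend, ?_⟩
        filter_upwards [eventually_ge_atTop k₀, hηev] with k h1 h2
        exact ⟨hrnn k h1, h2⟩
      have := hc.tendsto.comp hin
      rw [hγ0] at this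
      exact this
    have hγrsub : Tendsto (fun ℓ => γ (r (sub ℓ))) atTop (𝓝 0) :=
      hγr.comp hsubmono.tendsto_atTop
    -- per-step key estimate
    have key : ∀ k, k₀ ≤ k → ENNReal.ofReal (r k) < η →
        dist (x k) xstar < ε / 2 → ‖d k‖ < ε / 2 →
        ‖d k‖ ≤ 2 * L / σ * (γ (r k) - γ (r (k + 1))) := by
      intro k hk hηk hxk hdk
      have hrpos : 0 < r k := hallpos k hk
      have hxU : x k ∈ U := hεU (by
        rw [Metric.mem_ball]
        linarith)
      have hrkeq : g (x k) - h (x k) - (g xstar - h xstar) = r k := by simp [hr]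
      have hKL1 : 1 ≤ γ' (r k) *
          sInf {rr : ℝ | ∃ s ∈ subdiff h (x k), rr = ‖g' (x k) - s‖} := by
        have h1 : g xstar - h xstar < g (x k) - h (x k) := by
          have h2 := hrpos
          rw [← hrkeq] at h2
          linarith
        have h3 := hKL (x k) hxU h1 (by rw [hrkeq]; exact hηk)
        rwa [hrkeq] at h3
      have hmem : ‖g' (x k) - g' (y k)‖ ∈
          {rr : ℝ | ∃ s ∈ subdiff h (x k), rr = ‖g' (x k) - s‖} := ⟨g' (y k), hw k, rfl⟩
      have hbdd : BddBelow {rr : ℝ | ∃ s ∈ subdiff h (x k), rr = ‖g' (x k) - s‖} :=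
        ⟨0, fun rr ⟨s, _, hrr⟩ => hrr ▸ norm_nonneg _⟩
      have hinf_le : sInf {rr : ℝ | ∃ s ∈ subdiff h (x k), rr = ‖g' (x k) - s‖} ≤
          ‖g' (x k) - g' (y k)‖ := csInf_le hbdd hmem
      have hxball : x k ∈ Metric.ball xstar δhat := by
        rw [Metric.mem_ball]
        linarith
      have hyball : y k ∈ Metric.ball xstar δhat := by
        rw [Metric.mem_ball]
        have h1 : dist (y k) (x k) = ‖d k‖ := by
          simp [dist_eq_norm, hdd]
        calc dist (y k) xstar ≤ dist (y k) (x k) + dist (x k) xstar := dist_triangle _ _ _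
        _ < ε / 2 + ε / 2 := by rw [h1]; exact add_lt_add hdk hxk
        _ = ε := by ring
        _ ≤ δhat := hεδ
      have hlipk : ‖g' (x k) - g' (y k)‖ ≤ L * ‖d k‖ := by
        have := hlip (x k) hxball (y k) hyball
        rwa [show ‖x k - y k‖ = ‖d k‖ by rw [norm_sub_rev]; simp [hdd]] at this
      have hγ'k : 0 < γ' (r k) := hγ'pos (r k) hrpos hηk
      have h1 : 1 ≤ γ' (r k) * (L * ‖d k‖) :=
        le_trans hKL1 (mul_le_mul_of_nonneg_left (le_trans hinf_le hlipk) hγ'k.le)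
      have hrk1 := hrdec k hk
      have hrk1nn : 0 ≤ r (k + 1) := hrnn (k + 1) (le_trans hk (Nat.le_succ k))
      have hrle : r (k + 1) ≤ r k := by
        have hnn : 0 ≤ σ / 2 * ‖d k‖ ^ 2 := by positivity
        linarith
      have hηk1 : ENNReal.ofReal (r (k + 1)) < η :=
        lt_of_le_of_lt (ENNReal.ofReal_le_ofReal hrle) hηk
      have htan := concave_tangent_le hγconc (hγderiv (r k) hrpos hηk)
        (⟨hrk1nn, hηk1⟩ : r (k + 1) ∈ {s : ℝ | 0 ≤ s ∧ ENNReal.ofReal s < η})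
        (⟨hrnn k hk, hηk⟩ : r k ∈ {s : ℝ | 0 ≤ s ∧ ENNReal.ofReal s < η})
      rw [div_mul_eq_mul_div, le_div_iff₀ hσ]
      have hA := mul_le_mul_of_nonneg_left h1
        (mul_nonneg (by linarith : (0:ℝ) ≤ σ / 2) (norm_nonneg (d k)))
      have hB := mul_le_mul_of_nonneg_left
        (mul_le_mul_of_nonneg_left hrk1 hγ'k.le) hL.le
      have hCq := mul_le_mul_of_nonneg_left htan hL.le
      nlinarith [hA, hB, hCq]
    -- choose starting index K
    obtain ⟨K₁, hK₁⟩ := eventually_atTop.mp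
      ((eventually_ge_atTop k₀).and (hηev.and
        (hdtend.eventually (gt_mem_nhds (by positivity : (0:ℝ) < ε / 2)))))
    have hev1 : ∀ᶠ ℓ in atTop, K₁ ≤ sub ℓ := by
      filter_upwards [eventually_ge_atTop K₁] with ℓ hℓ
      exact le_trans hℓ (hsubge ℓ)
    have hev2 : ∀ᶠ ℓ in atTop, dist (x (sub ℓ)) xstar < ε / 4 :=
      hsubtend.eventually (Metric.ball_mem_nhds xstar (by positivity))
    have hev3 : ∀ᶠ ℓ in atTop, C * γ (r (sub ℓ)) < ε / 4 := by
      have := hγrsub.const_mul C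
      rw [mul_zero] at this
      exact this.eventually (gt_mem_nhds (by positivity))
    obtain ⟨ℓ₀, hℓK₁, hℓdist, hℓγ⟩ := (hev1.and (hev2.and hev3)).exists
    set K := sub ℓ₀ with hKdef
    obtain ⟨hℓdist, hℓγ⟩ := (⟨hℓdist, hℓγ⟩ :
      dist (x K) xstar < ε / 4 ∧ C * γ (r K) < ε / 4)
    have htail : ∀ k, K ≤ k → k₀ ≤ k ∧ ENNReal.ofReal (r k) < η ∧ ‖d k‖ < ε / 2 :=
      fun k hk => hK₁ k (le_trans hℓK₁ hk)
    have hγnn : ∀ k, K ≤ k → 0 ≤ γ (r k) := fun k hk =>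
      hγnonneg (r k) (hrnn k (htail k hk).1) (htail k hk).2.1
    have hball : ∀ m, K ≤ m →
        dist (x m) xstar ≤ dist (x K) xstar + C * (γ (r K) - γ (r m)) := by
      intro m hm
      induction m, hm using Nat.le_induction with
      | base => simp
      | succ m hm ih =>
        obtain ⟨hm0, hmη, hmd⟩ := htail m hm
        have hxm : dist (x m) xstar < ε / 2 := by
          have h0 : 0 ≤ γ (r m) := hγnn m hm
          calc dist (x m) xstar ≤ dist (x K) xstar + C * (γ (r K) - γ (r m)) := ih
          _ ≤ dist (x K) xstar + C * γ (r K) := by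
              linarith [mul_nonneg hCpos.le h0]
          _ < ε / 4 + ε / 4 := by linarith
          _ = ε / 2 := by ring
        have hkey := key m hm0 hmη hxm hmd
        have hstep' : dist (x (m + 1)) (x m) ≤ (1 + lamm1) * ‖d m‖ := by
          have hxd : x (m + 1) - x m = (1 + t m) • d m := by
            rw [hstep m]
            simp only [hdd]
            module
          rw [dist_eq_norm, hxd, norm_smul, Real.norm_eq_abs,
            abs_of_pos (by linarith [(ht m).1] : (0:ℝ) < 1 + t m)]
          apply mul_le_mul_of_nonneg_right _ (norm_nonneg _)
          linarith [(ht m).2]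
        have hC' : (1 + lamm1) * ‖d m‖ ≤ C * (γ (r m) - γ (r (m + 1))) := by
          rw [hC]
          calc (1 + lamm1) * ‖d m‖ ≤
              (1 + lamm1) * (2 * L / σ * (γ (r m) - γ (r (m + 1)))) := by
                apply mul_le_mul_of_nonneg_left hkey (by linarith)
          _ = (1 + lamm1) * (2 * L / σ) * (γ (r m) - γ (r (m + 1))) := by ring
        calc dist (x (m + 1)) xstar ≤ dist (x (m + 1)) (x m) + dist (x m) xstar :=
          dist_triangle _ _ _
        _ ≤ (1 + lamm1) * ‖d m‖ + (dist (x K) xstar + C * (γ (r K) - γ (r m))) :=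
          add_le_add hstep' ih
        _ ≤ C * (γ (r m) - γ (r (m + 1))) + (dist (x K) xstar + C * (γ (r K) - γ (r m))) := by
          linarith
        _ = dist (x K) xstar + C * (γ (r K) - γ (r (m + 1))) := by ring
    have hdm : ∀ m, K ≤ m → dist (x (m + 1)) (x m) ≤ C * (γ (r m) - γ (r (m + 1))) := by
      intro m hm
      obtain ⟨hm0, hmη, hmd⟩ := htail m hm
      have hxm : dist (x m) xstar < ε / 2 := by
        have h0 : 0 ≤ γ (r m) := hγnn m hm
        calc dist (x m) xstar ≤ dist (x K) xstar + C * (γ (r K) - γ (r m)) := hball m hm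
        _ ≤ dist (x K) xstar + C * γ (r K) := by
            linarith [mul_nonneg hCpos.le h0]
        _ < ε / 4 + ε / 4 := by linarith
        _ = ε / 2 := by ring
      have hkey := key m hm0 hmη hxm hmd
      have hstep' : dist (x (m + 1)) (x m) ≤ (1 + lamm1) * ‖d m‖ := by
        have hxd : x (m + 1) - x m = (1 + t m) • d m := by
          rw [hstep m]
          simp only [hdd]
          module
        rw [dist_eq_norm, hxd, norm_smul, Real.norm_eq_abs,
          abs_of_pos (by linarith [(ht m).1] : (0:ℝ) < 1 + t m)]
        apply mul_le_mul_of_nonneg_right _ (norm_nonneg _)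
        linarith [(ht m).2]
      calc dist (x (m + 1)) (x m) ≤ (1 + lamm1) * ‖d m‖ := hstep'
      _ ≤ (1 + lamm1) * (2 * L / σ * (γ (r m) - γ (r (m + 1)))) :=
        mul_le_mul_of_nonneg_left hkey (by linarith)
      _ = C * (γ (r m) - γ (r (m + 1))) := by rw [hC]; ring
    have hsum : ∀ m, K ≤ m → ∀ m', m ≤ m' →
        dist (x m') (x m) ≤ C * (γ (r m) - γ (r m')) := by
      intro m hm m' hm'
      induction m', hm' using Nat.le_induction with
      | base => simp
      | succ p hp ih =>
        have h1 := hdm p (le_trans hm hp)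
        calc dist (x (p + 1)) (x m) ≤ dist (x (p + 1)) (x p) + dist (x p) (x m) :=
          dist_triangle _ _ _
        _ ≤ C * (γ (r p) - γ (r (p + 1))) + C * (γ (r m) - γ (r p)) := add_le_add h1 ih
        _ = C * (γ (r m) - γ (r (p + 1))) := by ring
    have hfin : ∀ m, K ≤ m → dist xstar (x m) ≤ C * γ (r m) := by
      intro m hm
      have h1 : Tendsto (fun ℓ => dist (x (sub ℓ)) (x m)) atTop (𝓝 (dist xstar (x m))) :=
        hsubtend.dist tendsto_const_nhds
      have h2 : Tendsto (fun ℓ => C * (γ (r m) - γ (r (sub ℓ)))) atTop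
          (𝓝 (C * (γ (r m) - 0))) := (tendsto_const_nhds.sub hγrsub).const_mul C
      have h3 : ∀ᶠ ℓ in atTop, dist (x (sub ℓ)) (x m) ≤ C * (γ (r m) - γ (r (sub ℓ))) := by
        filter_upwards [eventually_ge_atTop m] with ℓ hℓ
        exact hsum m hm (sub ℓ) (le_trans hℓ (hsubge ℓ))
      have h4 := le_of_tendsto_of_tendsto h1 h2 h3
      simpa using h4
    rw [tendsto_iff_dist_tendsto_zero]
    refine squeeze_zero' (g := fun m => C * γ (r m))
      (Eventually.of_forall fun m => dist_nonneg) ?_ ?_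
    · filter_upwards [eventually_ge_atTop K] with m hm
      rw [dist_comm]
      exact hfin m hm
    · have := hγr.const_mul C
      simpa using this

end
end
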